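/- For every integer k with 1 ≤ k ≤ d + 1, if the intersection of k closed halfspaces in ℝ^d is nonempty, then its dimension is at least d − k + 1 (and at most d). -/

import Mathlib

/-- The dimension of a subset of `ℝ^d`: the rank of the direction of its affine span. -/
noncomputable def setDim {d : ℕ} (S : Set (EuclideanSpace ℝ (Fin d))) : ℕ :=
  Module.finrank ℝ (affineSpan ℝ S).direction

/-- a nonempty intersection of `k ≤ d + 1` closed halfspaces in `ℝ^d`
has dimension at least `d - k + 1` (and at most `d`). -/
theorem dim_inter_halfspaces
    (d k : ℕ) (hk1 : 1 ≤ k) (hkd : k ≤ d + 1)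
    (f : Fin k → (EuclideanSpace ℝ (Fin d) →ₗ[ℝ] ℝ)) (hf : ∀ i, f i ≠ 0)
    (a : Fin k → ℝ)
    (S : Set (EuclideanSpace ℝ (Fin d))) (hS : S = ⋂ i, {x | a i ≤ f i x})
    (hne : S.Nonempty) :
    d + 1 - k ≤ setDim S ∧ setDim S ≤ d := by
  have hfd : Module.finrank ℝ (EuclideanSpace ℝ (Fin d)) = d := finrank_euclideanSpace_fin
  obtain ⟨x₀, hx₀⟩ := hne
  have hx₀' : ∀ i, a i ≤ f i x₀ := by
    intro i
    have := hx₀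
    rw [hS] at this
    exact Set.mem_iInter.mp this i
  have hmem : ∀ v : EuclideanSpace ℝ (Fin d), (∀ i, 0 ≤ f i v) →
      v ∈ (affineSpan ℝ S).direction := by
    intro v hv
    have hvS : x₀ + v ∈ S := by
      rw [hS, Set.mem_iInter]
      intro i
      have : f i (x₀ + v) = f i x₀ + f i v := map_add _ _ _
      simp only [Set.mem_setOf_eq, this]
      have := hv i
      linarith [hx₀' i]
    have := AffineSubspace.vsub_mem_direction
      (subset_affineSpan ℝ S hvS) (subset_affineSpan ℝ S hx₀)
    simpa [vsub_eq_sub] using this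
  set g : EuclideanSpace ℝ (Fin d) →ₗ[ℝ] (Fin k → ℝ) := LinearMap.pi f with hg
  set V : Submodule ℝ (EuclideanSpace ℝ (Fin d)) := LinearMap.ker g with hVdef
  have hVdir : V ≤ (affineSpan ℝ S).direction := by
    intro v hv
    apply hmem
    intro i
    have : g v = 0 := hv
    have : f i v = 0 := congrFun this i
    simp [this]
  have hrn : Module.finrank ℝ (LinearMap.range g) + Module.finrank ℝ V = d := by
    rw [hVdef]
    rw [LinearMap.finrank_range_add_finrank_ker g, hfd]
  have hdirle : Module.finrank ℝ (affineSpan ℝ S).direction ≤ d := by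
    calc Module.finrank ℝ (affineSpan ℝ S).direction
        ≤ Module.finrank ℝ (EuclideanSpace ℝ (Fin d)) := Submodule.finrank_le _
      _ = d := hfd
  refine ⟨?_, hdirle⟩
  by_cases hr : LinearMap.range g = ⊤
  · -- g surjective: find u with f i u = 1 for all i
    have hsurj : Function.Surjective g := LinearMap.range_eq_top.mp hr
    obtain ⟨u, hu⟩ := hsurj (fun _ => 1)
    have hfu : ∀ i, f i u = 1 := fun i => congrFun hu i
    have huV : u ∉ V := by
      intro h
      have : g u = 0 := h
      have : f ⟨0, hk1⟩ u = 0 := congrFun this ⟨0, hk1⟩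
      rw [hfu] at this
      norm_num at this
    have hudir : u ∈ (affineSpan ℝ S).direction := by
      apply hmem
      intro i
      rw [hfu]
      norm_num
    have hsup : V ⊔ Submodule.span ℝ {u} ≤ (affineSpan ℝ S).direction := by
      apply sup_le hVdir
      rw [Submodule.span_le]
      intro x hx
      rw [Set.mem_singleton_iff] at hx
      subst hx
      exact hudir
    have hlt : V < V ⊔ Submodule.span ℝ {u} := by
      refine lt_of_le_of_ne le_sup_left ?_
      intro h
      apply huV
      rw [h]
      exact Submodule.mem_sup_right (Submodule.mem_span_singleton_self u)
    have h1 : Module.finrank ℝ V < Module.finrank ℝ (V ⊔ Submodule.span ℝ {u} :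
        Submodule ℝ (EuclideanSpace ℝ (Fin d))) :=
      Submodule.finrank_lt_finrank_of_lt hlt
    have h2 : Module.finrank ℝ (V ⊔ Submodule.span ℝ {u} :
        Submodule ℝ (EuclideanSpace ℝ (Fin d))) ≤
        Module.finrank ℝ (affineSpan ℝ S).direction := Submodule.finrank_mono hsup
    have hrk : Module.finrank ℝ (LinearMap.range g) = k := by
      rw [hr]
      rw [finrank_top]
      simp [Module.finrank_fintype_fun_eq_card]
    rw [hrk] at hrn
    unfold setDim
    omega
  · have hrlt : Module.finrank ℝ (LinearMap.range g) < k := by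
      have := Submodule.finrank_lt (K := ℝ) (V := Fin k → ℝ) hr
      simpa [Module.finrank_fintype_fun_eq_card] using this
    have hVle : Module.finrank ℝ V ≤ Module.finrank ℝ (affineSpan ℝ S).direction :=
      Submodule.finrank_mono hVdir
    unfold setDim
    omega
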